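/- Let X_1, ..., X_{N_s} be real-valued random variables on a probability space that are independent and identically distributed, with N_s ≥ 2. Let X̂ be the sample mean and σ̂ the sample standard deviation of X_1,...,X_{N_s}, and assume σ̂ > 0 almost surely. Then for every λ > 0 and every index i ∈ {1,...,N_s}, P(X_i − X̂ ≥ λ·σ̂) ≤ 1/(λ² + 1). -/

import Mathlib

open MeasureTheory ProbabilityTheory Real
open scoped ENNReal

lemma cantelli_aux {N : ℕ} (d : Fin N → ℝ) (b : ℝ) (hb : 0 < b)
    (hsum : ∑ j, d j = 0) :
    ((Finset.univ.filter (fun j => b ≤ d j)).card : ℝ) * b ^ 2 * N ≤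
      ((N : ℝ) - (Finset.univ.filter (fun j => b ≤ d j)).card) * ∑ j, d j ^ 2 := by
  classical
  set S : Finset (Fin N) := Finset.univ.filter (fun j => b ≤ d j) with hSdef
  set k := S.card with hk
  have hkN : k ≤ N := by
    simpa using (Finset.card_filter_le Finset.univ (fun j => b ≤ d j))
  have hsq_nonneg : (0:ℝ) ≤ ∑ j, d j ^ 2 := Finset.sum_nonneg fun j _ => sq_nonneg _
  rcases Nat.eq_zero_or_pos k with hk0 | hkpos
  · rw [hk0]
    push_cast
    nlinarith [mul_nonneg (Nat.cast_nonneg (α := ℝ) N) hsq_nonneg]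
  have hT : (k : ℝ) * b ≤ ∑ j ∈ S, d j := by
    calc (k : ℝ) * b = ∑ _j ∈ S, b := by rw [Finset.sum_const, nsmul_eq_mul]
    _ ≤ ∑ j ∈ S, d j :=
      Finset.sum_le_sum fun j hj => (Finset.mem_filter.mp hj).2
  have hB : (k : ℝ) * b ^ 2 ≤ ∑ j ∈ S, d j ^ 2 := by
    calc (k : ℝ) * b ^ 2 = ∑ _j ∈ S, b ^ 2 := by rw [Finset.sum_const, nsmul_eq_mul]
    _ ≤ ∑ j ∈ S, d j ^ 2 := Finset.sum_le_sum fun j hj =>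
        pow_le_pow_left₀ hb.le (Finset.mem_filter.mp hj).2 2
  have hkb_pos : (0:ℝ) < (k : ℝ) * b := by
    have : (0:ℝ) < (k : ℝ) := by exact_mod_cast hkpos
    positivity
  have hkltN : k < N := by
    rcases lt_or_eq_of_le hkN with h | h
    · exact h
    · exfalso
      have hSuniv : S = Finset.univ :=
        Finset.eq_univ_of_card S (by rw [← hk, h, Fintype.card_fin])
      have : (k : ℝ) * b ≤ 0 := by
        rw [← hsum, ← hSuniv]; exact hT
      linarith
  set Sc : Finset (Fin N) := Finset.univ.filter (fun j => ¬ b ≤ d j) with hScdef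
  have hsplit : ∑ j ∈ S, d j + ∑ j ∈ Sc, d j = 0 := by
    rw [← hsum]; exact Finset.sum_filter_add_sum_filter_not _ _ _
  have hsplit2 : ∑ j ∈ S, d j ^ 2 + ∑ j ∈ Sc, d j ^ 2 = ∑ j, d j ^ 2 :=
    Finset.sum_filter_add_sum_filter_not _ _ _
  have hcard : (Sc.card : ℝ) = (N : ℝ) - k := by
    have := Finset.card_filter_add_card_filter_not
      (s := (Finset.univ : Finset (Fin N))) (p := fun j => b ≤ d j)
    simp only [Finset.card_univ, Fintype.card_fin] at this
    have h2 : S.card + Sc.card = N := this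
    have : (S.card : ℝ) + Sc.card = N := by exact_mod_cast h2
    linarith
  have hCS : (∑ j ∈ Sc, d j) ^ 2 ≤ ((N:ℝ) - k) * ∑ j ∈ Sc, d j ^ 2 := by
    rw [← hcard]
    exact_mod_cast sq_sum_le_card_mul_sum_sq (s := Sc) (f := d)
  have hNk : (0:ℝ) < (N : ℝ) - k := by
    have : (k:ℝ) < N := by exact_mod_cast hkltN
    linarith
  have hT2 : ((k:ℝ) * b) ^ 2 ≤ (∑ j ∈ S, d j) ^ 2 :=
    pow_le_pow_left₀ hkb_pos.le hT 2
  nlinarith [mul_le_mul_of_nonneg_left hB hNk.le, hCS, hT2, hsplit, hsplit2]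

/-- **In-sample Cantelli bound (Lemma 5).**
Let `X₁, …, X_{Ns}` be i.i.d. real-valued random variables on a probability
space, `Ns ≥ 2`.  With `X̂` the sample mean and `σ̂` the (uncorrected) sample
standard deviation, assumed a.s. positive, for every `λ > 0` and every index
`i`, `P(Xᵢ − X̂ ≥ λ σ̂) ≤ 1 / (λ² + 1)`. -/
theorem in_sample_cantelli
    {Ω : Type*} [MeasurableSpace Ω] (μ : Measure Ω) [IsProbabilityMeasure μ]
    (Ns : ℕ) (hNs : 2 ≤ Ns)
    (Xs : Fin Ns → Ω → ℝ)
    (hXsmeas : ∀ i, Measurable (Xs i))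
    (hIndep : iIndepFun Xs μ)
    (hIdent : ∀ i j : Fin Ns, IdentDistrib (Xs i) (Xs j) μ μ)
    (Xhat : Ω → ℝ) (hXhat : ∀ ω, Xhat ω = (1 / (Ns : ℝ)) * ∑ i, Xs i ω)
    (sd : Ω → ℝ)
    (hsd : ∀ ω, sd ω = Real.sqrt ((1 / (Ns : ℝ)) * ∑ i, (Xs i ω - Xhat ω) ^ 2))
    (hsd_pos : ∀ᵐ ω ∂μ, 0 < sd ω)
    (lam : ℝ) (hlam : 0 < lam) (i : Fin Ns) :
    μ {ω | lam * sd ω ≤ Xs i ω - Xhat ω} ≤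
      ENNReal.ofReal (1 / (lam ^ 2 + 1)) := by
  classical
  have hNpos : (0:ℝ) < (Ns : ℝ) := by
    have : (0:ℕ) < Ns := by omega
    exact_mod_cast this
  -- symmetric functionals on the product space
  set M : (Fin Ns → ℝ) → ℝ := fun x => (1 / (Ns : ℝ)) * ∑ k, x k with hM
  set Sf : (Fin Ns → ℝ) → ℝ :=
    fun x => Real.sqrt ((1 / (Ns : ℝ)) * ∑ k, (x k - M x) ^ 2) with hSf
  have hMmeas : Measurable M :=
    measurable_const.mul (Finset.measurable_sum _ fun k _ => measurable_pi_apply k)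
  have hSmeas : Measurable Sf :=
    (measurable_const.mul (Finset.measurable_sum _ fun k _ =>
      ((measurable_pi_apply k).sub hMmeas).pow_const 2)).sqrt
  set B : Fin Ns → Set (Fin Ns → ℝ) :=
    fun j => {x | lam * Sf x ≤ x j - M x} with hBdef
  have hBmeas : ∀ j, MeasurableSet (B j) := fun j =>
    measurableSet_le (measurable_const.mul hSmeas) ((measurable_pi_apply j).sub hMmeas)
  set V : Ω → (Fin Ns → ℝ) := fun ω k => Xs k ω with hV
  have hVmeas : Measurable V := measurable_pi_lambda _ fun k => hXsmeas k
  have hpre : ∀ j, {ω | lam * sd ω ≤ Xs j ω - Xhat ω} = V ⁻¹' B j := by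
    intro j
    ext ω
    simp only [Set.mem_preimage, Set.mem_setOf_eq, hBdef, hSf, hM, hV]
    rw [hsd ω, hXhat ω]
  -- the joint law is a product measure
  set m : Measure ℝ := μ.map (Xs i) with hm
  have hmI : IsProbabilityMeasure m := Measure.isProbabilityMeasure_map (hXsmeas i).aemeasurable
  have hlaw : μ.map V = Measure.pi (fun _ : Fin Ns => m) := by
    symm
    apply Measure.pi_eq
    intro s hs
    rw [Measure.map_apply hVmeas (MeasurableSet.univ_pi hs)]
    have hset : V ⁻¹' Set.pi Set.univ s = ⋂ j ∈ (Finset.univ : Finset (Fin Ns)), Xs j ⁻¹' s j := by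
      ext ω
      simp [Set.mem_pi, hV]
    rw [hset, hIndep.measure_inter_preimage_eq_mul Finset.univ (fun j _ => hs j)]
    refine Finset.prod_congr rfl fun j _ => ?_
    rw [hm, (hIdent i j).map_eq, Measure.map_apply (hXsmeas j) (hs j)]
  -- permutation invariance: all indices have the same probability
  have hEq : ∀ j, μ (V ⁻¹' B j) = μ (V ⁻¹' B i) := by
    intro j
    rw [← Measure.map_apply hVmeas (hBmeas j), ← Measure.map_apply hVmeas (hBmeas i), hlaw]
    set e : Fin Ns ≃ Fin Ns := Equiv.swap i j with he
    set φ := MeasurableEquiv.piCongrLeft (fun _ : Fin Ns => ℝ) e with hφ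
    have hMinv : ∀ x : Fin Ns → ℝ, M (φ x) = M x := by
      intro x
      simp only [hM]
      congr 1
      calc ∑ k, φ x k = ∑ k, φ x (e k) := (Equiv.sum_comp e (fun k => φ x k)).symm
      _ = ∑ k, x k := by
        refine Finset.sum_congr rfl fun k _ => ?_
        rw [hφ, MeasurableEquiv.piCongrLeft_apply_apply]
    have hSinv : ∀ x : Fin Ns → ℝ, Sf (φ x) = Sf x := by
      intro x
      simp only [hSf, hMinv]
      congr 2
      calc ∑ k, (φ x k - M x) ^ 2 = ∑ k, (φ x (e k) - M x) ^ 2 :=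
        (Equiv.sum_comp e (fun k => (φ x k - M x) ^ 2)).symm
      _ = ∑ k, (x k - M x) ^ 2 := by
        refine Finset.sum_congr rfl fun k _ => ?_
        rw [hφ, MeasurableEquiv.piCongrLeft_apply_apply]
    have hφB : φ ⁻¹' (B j) = B i := by
      ext x
      have hxj : φ x j = x i := by
        have : φ x (e i) = x i := by rw [hφ, MeasurableEquiv.piCongrLeft_apply_apply]
        rwa [he, Equiv.swap_apply_left] at this
      simp only [Set.mem_preimage, hBdef, Set.mem_setOf_eq, hMinv, hSinv, hxj]
    have hmp : (Measure.pi fun _ : Fin Ns => m).map φ = Measure.pi fun _ : Fin Ns => m :=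
      MeasureTheory.Measure.pi_map_piCongrLeft e (fun _ : Fin Ns => m)
    calc (Measure.pi fun _ : Fin Ns => m) (B j)
        = ((Measure.pi fun _ : Fin Ns => m).map φ) (B j) := by rw [hmp]
      _ = (Measure.pi fun _ : Fin Ns => m) (φ ⁻¹' B j) :=
        Measure.map_apply φ.measurable (hBmeas j)
      _ = (Measure.pi fun _ : Fin Ns => m) (B i) := by rw [hφB]
  -- counting bound, pointwise
  have hcount : ∀ ω, 0 < sd ω →
      ((Finset.univ.filter (fun j => lam * sd ω ≤ Xs j ω - Xhat ω)).card : ℝ) * (lam ^ 2 + 1)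
        ≤ Ns := by
    intro ω hsdω
    set d : Fin Ns → ℝ := fun j => Xs j ω - Xhat ω with hd
    have hsum : ∑ j, d j = 0 := by
      simp only [hd, Finset.sum_sub_distrib, Finset.sum_const, Finset.card_univ,
        Fintype.card_fin, nsmul_eq_mul]
      rw [hXhat ω]
      field_simp
      ring
    have hb : 0 < lam * sd ω := mul_pos hlam hsdω
    have haux := cantelli_aux d (lam * sd ω) hb hsum
    have hsq : ∑ j, d j ^ 2 = (Ns : ℝ) * sd ω ^ 2 := by
      have harg : (0:ℝ) ≤ (1 / (Ns : ℝ)) * ∑ k, (Xs k ω - Xhat ω) ^ 2 := by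
        apply mul_nonneg (by positivity)
        exact Finset.sum_nonneg fun k _ => sq_nonneg _
      have : sd ω ^ 2 = (1 / (Ns : ℝ)) * ∑ k, (Xs k ω - Xhat ω) ^ 2 := by
        rw [hsd ω, Real.sq_sqrt harg]
      rw [this, hd]
      field_simp
    rw [hsq] at haux
    set k : ℕ := (Finset.univ.filter (fun j => lam * sd ω ≤ Xs j ω - Xhat ω)).card with hkdef
    have hk' : ((Finset.univ.filter (fun j => lam * sd ω ≤ d j)).card : ℝ) = (k : ℝ) := by
      simp only [hd, hkdef]
    rw [hk'] at haux
    have hsd2 : (0:ℝ) < sd ω ^ 2 := by positivity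
    have hpos : (0:ℝ) < (Ns:ℝ) * sd ω ^ 2 := mul_pos hNpos hsd2
    have h2 : (k:ℝ) * lam ^ 2 * ((Ns:ℝ) * sd ω ^ 2) ≤ ((Ns:ℝ) - k) * ((Ns:ℝ) * sd ω ^ 2) := by
      linear_combination haux
    have h3 : (k:ℝ) * lam ^ 2 ≤ (Ns:ℝ) - k := le_of_mul_le_mul_right h2 hpos
    linarith
  -- integrate
  set A : Fin Ns → Set Ω := fun j => V ⁻¹' B j with hA
  have hAmeas : ∀ j, MeasurableSet (A j) := fun j => hVmeas (hBmeas j)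
  have hsum_eq : ∑ j, μ (A j) = (Ns : ℝ≥0∞) * μ (A i) := by
    rw [Finset.sum_congr rfl fun j _ => hEq j]
    simp [Finset.sum_const, Finset.card_univ]
    rfl
  have hbound : ∑ j, μ (A j) ≤ ENNReal.ofReal ((Ns : ℝ) * (1 / (lam ^ 2 + 1))) := by
    have h1 : ∑ j, μ (A j) = ∫⁻ ω, ∑ j, (A j).indicator (1 : Ω → ℝ≥0∞) ω ∂μ := by
      rw [lintegral_finset_sum _ fun j _ => (measurable_one.indicator (hAmeas j))]
      exact Finset.sum_congr rfl fun j _ => (lintegral_indicator_one (hAmeas j)).symm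
    rw [h1]
    have h2 : ∀ᵐ ω ∂μ, ∑ j, (A j).indicator (1 : Ω → ℝ≥0∞) ω
        ≤ ENNReal.ofReal ((Ns : ℝ) * (1 / (lam ^ 2 + 1))) := by
      filter_upwards [hsd_pos] with ω hsdω
      have hωcount := hcount ω hsdω
      set k : ℕ := (Finset.univ.filter (fun j => lam * sd ω ≤ Xs j ω - Xhat ω)).card with hkdef
      have hmem : ∀ j, ω ∈ A j ↔ lam * sd ω ≤ Xs j ω - Xhat ω := by
        intro j
        simp only [hA]
        rw [← hpre j]
        exact Iff.rfl
      have hind : ∑ j, (A j).indicator (1 : Ω → ℝ≥0∞) ω = (k : ℝ≥0∞) := by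
        calc ∑ j, (A j).indicator (1 : Ω → ℝ≥0∞) ω
            = ∑ j, if lam * sd ω ≤ Xs j ω - Xhat ω then (1:ℝ≥0∞) else 0 := by
              refine Finset.sum_congr rfl fun j _ => ?_
              rw [Set.indicator_apply]
              by_cases h : lam * sd ω ≤ Xs j ω - Xhat ω <;>
                simp [(hmem j), h]
          _ = ((Finset.univ.filter (fun j => lam * sd ω ≤ Xs j ω - Xhat ω)).card : ℝ≥0∞) :=
              Finset.sum_boole _ _
          _ = (k : ℝ≥0∞) := by rw [hkdef]
      rw [hind]
      have hkle : (k : ℝ) ≤ (Ns : ℝ) * (1 / (lam ^ 2 + 1)) := by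
        rw [mul_one_div, le_div_iff₀ (by positivity)]
        exact hωcount
      calc (k : ℝ≥0∞) = ENNReal.ofReal (k : ℝ) := by rw [ENNReal.ofReal_natCast]
      _ ≤ ENNReal.ofReal ((Ns : ℝ) * (1 / (lam ^ 2 + 1))) := ENNReal.ofReal_le_ofReal hkle
    calc ∫⁻ ω, ∑ j, (A j).indicator (1 : Ω → ℝ≥0∞) ω ∂μ
        ≤ ∫⁻ _ω, ENNReal.ofReal ((Ns : ℝ) * (1 / (lam ^ 2 + 1))) ∂μ := lintegral_mono_ae h2
      _ = ENNReal.ofReal ((Ns : ℝ) * (1 / (lam ^ 2 + 1))) := by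
        rw [lintegral_const, measure_univ, mul_one]
  rw [hpre i]
  have hfinal : (Ns : ℝ≥0∞) * μ (A i)
      ≤ (Ns : ℝ≥0∞) * ENNReal.ofReal (1 / (lam ^ 2 + 1)) := by
    rw [← hsum_eq]
    calc ∑ j, μ (A j) ≤ ENNReal.ofReal ((Ns : ℝ) * (1 / (lam ^ 2 + 1))) := hbound
    _ = (Ns : ℝ≥0∞) * ENNReal.ofReal (1 / (lam ^ 2 + 1)) := by
      rw [ENNReal.ofReal_mul (by positivity), ENNReal.ofReal_natCast]
  have hNs0 : (Ns : ℝ≥0∞) ≠ 0 := by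
    simp only [ne_eq, Nat.cast_eq_zero]
    omega
  exact (ENNReal.mul_le_mul_iff_right hNs0 (ENNReal.natCast_ne_top Ns)).mp hfinal
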